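/- As M → ∞, the partial sums ∑_{p=1}^{M} [(2p-3)!!]^2/(2p-1)! converge to π/2; equivalently, the maximal CFL number ν_max^{2M} = 1/∑_{p=1}^{M} [(2p-3)!!]^2/(2p-1)! is a decreasing sequence in M that converges to 2/π. -/

import Mathlib

open Nat Finset Real Filter

/-- The partial sum `S_M = ∑_{p=1}^{M} [(2p-3)!!]²/(2p-1)!`, whose reciprocal
is the maximal CFL number `ν_max^{2M}` of the `(2,2M)` leap-frog FDTD scheme. -/
noncomputable def SsumFD (M : ℕ) : ℝ :=
  ∑ p ∈ Finset.Icc 1 M, ((2 * p - 3)‼ : ℝ) ^ 2 / ((2 * p - 1)! : ℝ)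

/-- `S_M → π/2` as `M → ∞`; equivalently, the maximal CFL number
`ν_max^{2M} = 1/S_M` is decreasing in `M` (on `M ≥ 1`) and converges to `2/π`. -/
noncomputable def aFD (n : ℕ) : ℝ := (Nat.centralBinom n : ℝ) / 4 ^ n

lemma aFD_zero : aFD 0 = 1 := by simp [aFD, Nat.centralBinom]

lemma aFD_pos (n : ℕ) : 0 < aFD n := by
  have h : (0:ℝ) < (Nat.centralBinom n : ℝ) := by exact_mod_cast Nat.centralBinom_pos n
  unfold aFD; positivity

lemma aFD_succ (n : ℕ) : aFD (n + 1) * (2 * n + 2) = (2 * n + 1) * aFD n := by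
  have h := congrArg (Nat.cast : ℕ → ℝ) (Nat.succ_mul_centralBinom_succ n)
  push_cast at h
  have h4 : (4 : ℝ) ^ (n + 1) = 4 * 4 ^ n := by ring
  unfold aFD
  rw [h4]
  field_simp
  nlinarith [h, pow_pos (show (0:ℝ) < 4 by norm_num) n]

lemma aFD_succ_le (n : ℕ) : aFD (n + 1) ≤ aFD n := by
  have h := aFD_succ n
  nlinarith [aFD_pos n, aFD_pos (n + 1)]

lemma aFD_le_one (n : ℕ) : aFD n ≤ 1 := by
  induction n with
  | zero => simp [aFD_zero]
  | succ k ih => exact (aFD_succ_le k).trans ih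

lemma sym_sum (m : ℕ) (w : ℕ → ℝ) (C : ℝ) (hw : ∀ k ≤ m, w k + w (m - k) = C) :
    2 * ∑ k ∈ Finset.range (m + 1), w k * (aFD k * aFD (m - k))
      = C * ∑ k ∈ Finset.range (m + 1), aFD k * aFD (m - k) := by
  have hrefl := Finset.sum_range_reflect (fun k => w k * (aFD k * aFD (m - k))) (m + 1)
  have hdouble : (∑ k ∈ Finset.range (m + 1), w k * (aFD k * aFD (m - k)))
      + (∑ k ∈ Finset.range (m + 1), w k * (aFD k * aFD (m - k)))
      = C * ∑ k ∈ Finset.range (m + 1), aFD k * aFD (m - k) := by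
    nth_rewrite 1 [← hrefl]
    rw [← Finset.sum_add_distrib, Finset.mul_sum]
    apply Finset.sum_congr rfl
    intro k hk
    have hk' : k ≤ m := Nat.lt_succ_iff.mp (Finset.mem_range.mp hk)
    have h1 : m + 1 - 1 - k = m - k := by omega
    have h2 : m - (m - k) = k := by omega
    rw [h1, h2]
    linear_combination (aFD k * aFD (m - k)) * hw k hk'
  linarith [hdouble]

lemma aFD_conv (n : ℕ) : ∑ k ∈ Finset.range (n + 1), aFD k * aFD (n - k) = 1 := by
  induction n with
  | zero => simp [aFD_zero]
  | succ n ih =>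
    have hA := sym_sum n (fun k => 2 * (k : ℝ) + 1) (2 * (n : ℝ) + 2) (by
      intro k hk
      simp only [Nat.cast_sub hk]
      ring)
    have hB := sym_sum (n + 1) (fun k => 2 * (k : ℝ)) (2 * (n : ℝ) + 2) (by
      intro k hk
      simp only [Nat.cast_sub hk]
      push_cast
      ring)
    have hshift : ∑ k ∈ Finset.range (n + 1), (2 * (k : ℝ) + 1) * (aFD k * aFD (n - k))
        = ∑ j ∈ Finset.range (n + 2), (2 * (j : ℝ)) * (aFD j * aFD (n + 1 - j)) := by
      rw [Finset.sum_range_succ' (fun j => (2 * (j : ℝ)) * (aFD j * aFD (n + 1 - j))) (n + 1)]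
      simp only [Nat.cast_zero, mul_zero, zero_mul, add_zero]
      apply Finset.sum_congr rfl
      intro k hk
      have h1 : n + 1 - (k + 1) = n - k := by omega
      rw [h1]
      push_cast
      linear_combination -(aFD (n - k)) * aFD_succ k
    rw [ih] at hA
    rw [← hshift, hA] at hB
    have hne : (2 * (n : ℝ) + 2) ≠ 0 := by positivity
    have := mul_left_cancel₀ hne hB.symm
    simpa using this

lemma summable_aFD {u : ℝ} (hu0 : 0 ≤ u) (hu1 : u < 1) :
    Summable (fun n => aFD n * u ^ n) := by
  apply Summable.of_nonneg_of_le (fun n => mul_nonneg (aFD_pos n).le (pow_nonneg hu0 n))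
    (fun n => ?_) (summable_geometric_of_lt_one hu0 hu1)
  calc aFD n * u ^ n ≤ 1 * u ^ n := by
        apply mul_le_mul_of_nonneg_right (aFD_le_one n) (by positivity)
    _ = u ^ n := one_mul _

lemma tsum_aFD {u : ℝ} (hu0 : 0 ≤ u) (hu1 : u < 1) :
    ∑' n, aFD n * u ^ n = (Real.sqrt (1 - u))⁻¹ := by
  have hs := summable_aFD hu0 hu1
  have hnorm : Summable (fun n => ‖aFD n * u ^ n‖) := by
    apply hs.congr
    intro n
    rw [Real.norm_of_nonneg (mul_nonneg (aFD_pos n).le (pow_nonneg hu0 n))]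
  have hsq : (∑' n, aFD n * u ^ n) * (∑' n, aFD n * u ^ n) = (1 - u)⁻¹ := by
    rw [tsum_mul_tsum_eq_tsum_sum_range_of_summable_norm hnorm hnorm]
    have : ∀ n : ℕ, ∑ k ∈ Finset.range (n + 1), (aFD k * u ^ k) * (aFD (n - k) * u ^ (n - k))
        = u ^ n := by
      intro n
      have : ∀ k ∈ Finset.range (n + 1), (aFD k * u ^ k) * (aFD (n - k) * u ^ (n - k))
          = (aFD k * aFD (n - k)) * u ^ n := by
        intro k hk
        have hk' : k ≤ n := Nat.lt_succ_iff.mp (Finset.mem_range.mp hk)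
        rw [show (aFD k * u ^ k) * (aFD (n - k) * u ^ (n - k))
            = (aFD k * aFD (n - k)) * (u ^ k * u ^ (n - k)) by ring, ← pow_add,
          Nat.add_sub_cancel' hk']
      rw [Finset.sum_congr rfl this, ← Finset.sum_mul, aFD_conv, one_mul]
    rw [tsum_congr this, tsum_geometric_of_lt_one hu0 hu1]
  have hnn : 0 ≤ ∑' n, aFD n * u ^ n :=
    tsum_nonneg (fun n => mul_nonneg (aFD_pos n).le (pow_nonneg hu0 n))
  calc ∑' n, aFD n * u ^ n
      = Real.sqrt ((∑' n, aFD n * u ^ n) * (∑' n, aFD n * u ^ n)) :=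
        (Real.sqrt_mul_self hnn).symm
    _ = Real.sqrt ((1 - u)⁻¹) := by rw [hsq]
    _ = (Real.sqrt (1 - u))⁻¹ := Real.sqrt_inv _

lemma arcsin_eq_tsum {x : ℝ} (hx0 : 0 < x) (hx1 : x < 1) :
    Real.arcsin x = ∑' n : ℕ, aFD n / (2 * n + 1) * x ^ (2 * n + 1) := by
  have hsqrt_pos : ∀ t ∈ Set.Icc (0:ℝ) x, (0:ℝ) < Real.sqrt (1 - t ^ 2) := by
    intro t ht
    have h1 : t ^ 2 < 1 := by nlinarith [ht.1, ht.2]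
    exact Real.sqrt_pos.mpr (by linarith)
  have huIcc : Set.uIcc (0:ℝ) x = Set.Icc 0 x := Set.uIcc_of_le hx0.le
  -- (a) FTC
  have hFTC : ∫ t in (0:ℝ)..x, (Real.sqrt (1 - t ^ 2))⁻¹
      = Real.arcsin x := by
    have := intervalIntegral.integral_eq_sub_of_hasDerivAt
      (f := Real.arcsin) (f' := fun t => (Real.sqrt (1 - t ^ 2))⁻¹) (a := 0) (b := x)
      (fun t ht => by
        rw [huIcc] at ht
        have h1 : t ≠ 1 := by rintro rfl; linarith [ht.2]
        have h2 : t ≠ -1 := by rintro rfl; linarith [ht.1]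
        have := Real.hasDerivAt_arcsin h2 h1
        rwa [one_div] at this)
      (by
        apply ContinuousOn.intervalIntegrable
        rw [huIcc]
        apply ContinuousOn.inv₀
        · exact (continuous_const.sub (continuous_pow 2)).continuousOn.sqrt
        · exact fun t ht => (hsqrt_pos t ht).ne')
    rw [this, Real.arcsin_zero, sub_zero]
  -- (c) pointwise series expansion
  have hpt : ∀ t ∈ Set.Ioc (0:ℝ) x,
      (Real.sqrt (1 - t ^ 2))⁻¹ = ∑' n : ℕ, aFD n * t ^ (2 * n) := by
    intro t ht
    have ht2 : t ^ 2 < 1 := by nlinarith [ht.1, ht.2]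
    have h := tsum_aFD (u := t ^ 2) (by positivity) ht2
    rw [← h]
    exact tsum_congr fun n => by rw [pow_mul]
  -- (d) swap sum and integral
  have hswap : ∫ t in Set.Ioc (0:ℝ) x, (∑' n : ℕ, aFD n * t ^ (2 * n))
      = ∑' n : ℕ, ∫ t in Set.Ioc (0:ℝ) x, aFD n * t ^ (2 * n) := by
    apply MeasureTheory.integral_tsum
    · exact fun n => (Continuous.aestronglyMeasurable (by continuity))
    · -- finiteness
      have hbound : ∀ n : ℕ, ∫⁻ t, ‖aFD n * t ^ (2 * n)‖₊
            ∂(MeasureTheory.volume.restrict (Set.Ioc (0:ℝ) x))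
          ≤ ENNReal.ofReal (x ^ (2 * n)) * ENNReal.ofReal x := by
        intro n
        have hb : ∀ t ∈ Set.Ioc (0:ℝ) x,
            (‖aFD n * t ^ (2 * n)‖₊ : ENNReal) ≤ ENNReal.ofReal (x ^ (2 * n)) := by
          intro t ht
          have h0 : 0 ≤ aFD n * t ^ (2 * n) := by
            have h := aFD_pos n
            have h' := ht.1
            positivity
          have h1 : aFD n * t ^ (2 * n) ≤ x ^ (2 * n) := by
            calc aFD n * t ^ (2 * n) ≤ 1 * t ^ (2 * n) :=
                  mul_le_mul_of_nonneg_right (aFD_le_one n) (pow_nonneg ht.1.le _)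
              _ = t ^ (2 * n) := one_mul _
              _ ≤ x ^ (2 * n) := pow_le_pow_left₀ ht.1.le ht.2 _
          rw [show ((‖aFD n * t ^ (2 * n)‖₊ : ENNReal)) = ENNReal.ofReal (aFD n * t ^ (2 * n)) from Real.enorm_eq_ofReal h0]
          exact ENNReal.ofReal_le_ofReal h1
        calc ∫⁻ t, ‖aFD n * t ^ (2 * n)‖₊
              ∂(MeasureTheory.volume.restrict (Set.Ioc (0:ℝ) x))
            ≤ ∫⁻ _, ENNReal.ofReal (x ^ (2 * n))
              ∂(MeasureTheory.volume.restrict (Set.Ioc (0:ℝ) x)) := by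
              apply MeasureTheory.lintegral_mono_ae
              filter_upwards [MeasureTheory.ae_restrict_mem measurableSet_Ioc] with t ht
              exact hb t ht
          _ = ENNReal.ofReal (x ^ (2 * n)) * ENNReal.ofReal x := by
              rw [MeasureTheory.lintegral_const, MeasureTheory.Measure.restrict_apply_univ,
                Real.volume_Ioc, sub_zero]
      rw [← lt_top_iff_ne_top]
      calc ∑' n : ℕ, ∫⁻ t, ‖aFD n * t ^ (2 * n)‖₊
            ∂(MeasureTheory.volume.restrict (Set.Ioc (0:ℝ) x))
          ≤ ∑' n : ℕ, ENNReal.ofReal (x ^ (2 * n)) * ENNReal.ofReal x :=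
            ENNReal.tsum_le_tsum hbound
        _ = (∑' n : ℕ, ENNReal.ofReal (x ^ 2) ^ n) * ENNReal.ofReal x := by
            rw [ENNReal.tsum_mul_right]
            congr 1
            exact tsum_congr fun n => by
              rw [pow_mul, ENNReal.ofReal_pow (by positivity)]
        _ = (1 - ENNReal.ofReal (x ^ 2))⁻¹ * ENNReal.ofReal x := by
            rw [ENNReal.tsum_geometric]
        _ < ⊤ := by
            apply ENNReal.mul_lt_top
            · apply lt_top_iff_ne_top.mpr
              apply ENNReal.inv_ne_top.mpr
              have hlt : ENNReal.ofReal (x ^ 2) < 1 := by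
                rw [show (1 : ENNReal) = ENNReal.ofReal 1 by simp]
                exact (ENNReal.ofReal_lt_ofReal_iff (by norm_num)).mpr (by nlinarith)
              exact (tsub_pos_iff_lt.mpr hlt).ne'
            · exact ENNReal.ofReal_lt_top
  have heach : ∀ n : ℕ, ∫ t in Set.Ioc (0:ℝ) x, aFD n * t ^ (2 * n)
      = aFD n / (2 * n + 1) * x ^ (2 * n + 1) := by
    intro n
    rw [← intervalIntegral.integral_of_le hx0.le, intervalIntegral.integral_const_mul,
      integral_pow]
    have : (0:ℝ) ^ (2 * n + 1) = 0 := zero_pow (by omega)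
    rw [this, sub_zero]
    push_cast
    ring
  calc Real.arcsin x = ∫ t in (0:ℝ)..x, (Real.sqrt (1 - t ^ 2))⁻¹ := hFTC.symm
    _ = ∫ t in Set.Ioc (0:ℝ) x, (Real.sqrt (1 - t ^ 2))⁻¹ :=
        intervalIntegral.integral_of_le hx0.le
    _ = ∫ t in Set.Ioc (0:ℝ) x, (∑' n : ℕ, aFD n * t ^ (2 * n)) :=
        MeasureTheory.setIntegral_congr_fun measurableSet_Ioc hpt
    _ = ∑' n : ℕ, ∫ t in Set.Ioc (0:ℝ) x, aFD n * t ^ (2 * n) := hswap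
    _ = ∑' n : ℕ, aFD n / (2 * n + 1) * x ^ (2 * n + 1) := tsum_congr heach

noncomputable def cFD (n : ℕ) : ℝ := aFD n / (2 * n + 1)

lemma cFD_pos (n : ℕ) : 0 < cFD n := by
  have := aFD_pos n
  unfold cFD
  positivity

lemma cFD_le_one (n : ℕ) : cFD n ≤ 1 := by
  unfold cFD
  rw [div_le_one (by positivity)]
  calc aFD n ≤ 1 := aFD_le_one n
    _ ≤ 2 * n + 1 := by push_cast; linarith [Nat.cast_nonneg (α := ℝ) n]

lemma dfact_step (n : ℕ) : (2 * (n + 2) - 3)‼ = (2 * n + 1) * (2 * (n + 1) - 3)‼ := by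
  cases n with
  | zero => decide
  | succ m =>
    have h1 : 2 * (m + 1 + 2) - 3 = 2 * m + 1 + 2 := by omega
    have h2 : 2 * (m + 1 + 1) - 3 = 2 * m + 1 := by omega
    have h3 : 2 * (m + 1) + 1 = 2 * m + 1 + 2 := by omega
    rw [h1, h2, h3, Nat.doubleFactorial_add_two]

lemma key_nat (n : ℕ) : ((2 * (n + 1) - 3)‼) ^ 2 * 4 ^ n = Nat.centralBinom n * (2 * n)! := by
  induction n with
  | zero => decide
  | succ n ih =>
    apply Nat.eq_of_mul_eq_mul_left (show 0 < n + 1 by omega)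
    have h2 : (2 * (n + 1))! = (2 * n + 2) * ((2 * n + 1) * (2 * n)!) := by
      rw [show 2 * (n + 1) = 2 * n + 1 + 1 by ring, Nat.factorial_succ, Nat.factorial_succ]
    calc (n + 1) * (((2 * (n + 1 + 1)) - 3)‼ ^ 2 * 4 ^ (n + 1))
        = (n + 1) * (((2 * n + 1) * (2 * (n + 1) - 3)‼) ^ 2 * 4 ^ (n + 1)) := by
          rw [dfact_step]
      _ = (2 * n + 1) ^ 2 * 4 * (n + 1) * ((2 * (n + 1) - 3)‼ ^ 2 * 4 ^ n) := by ring
      _ = (2 * n + 1) ^ 2 * 4 * (n + 1) * (Nat.centralBinom n * (2 * n)!) := by rw [ih]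
      _ = (2 * (2 * n + 1) * Nat.centralBinom n) * ((2 * n + 2) * ((2 * n + 1) * (2 * n)!)) := by
          ring
      _ = ((n + 1) * Nat.centralBinom (n + 1)) * ((2 * n + 2) * ((2 * n + 1) * (2 * n)!)) := by
          rw [Nat.succ_mul_centralBinom_succ]
      _ = (n + 1) * (Nat.centralBinom (n + 1) * (2 * (n + 1))!) := by rw [h2]; ring

lemma cterm_eq (n : ℕ) :
    ((2 * (n + 1) - 3)‼ : ℝ) ^ 2 / ((2 * (n + 1) - 1)! : ℝ) = cFD n := by
  have hidx : 2 * (n + 1) - 1 = 2 * n + 1 := by omega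
  rw [hidx]
  have hkey := congrArg (Nat.cast : ℕ → ℝ) (key_nat n)
  push_cast at hkey
  have hfac : ((2 * n + 1)! : ℝ) = (2 * n + 1) * ((2 * n)! : ℝ) := by
    rw [show 2 * n + 1 = 2 * n + 1 by rfl]
    exact_mod_cast congrArg (Nat.cast : ℕ → ℝ) (Nat.factorial_succ (2 * n))
  have hfacpos : (0:ℝ) < ((2 * n + 1)! : ℝ) := by exact_mod_cast Nat.factorial_pos (2 * n + 1)
  have hfacpos' : (0:ℝ) < ((2 * n)! : ℝ) := by exact_mod_cast Nat.factorial_pos (2 * n)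
  have h4 : (0:ℝ) < 4 ^ n := by positivity
  unfold cFD aFD
  rw [div_div, div_eq_div_iff hfacpos.ne' (by positivity)]
  rw [hfac]
  nlinarith [hkey, hfacpos']

lemma summable_cx {x : ℝ} (hx0 : 0 ≤ x) (hx1 : x < 1) :
    Summable (fun n => cFD n * x ^ (2 * n + 1)) := by
  apply Summable.of_nonneg_of_le (fun n => mul_nonneg (cFD_pos n).le (pow_nonneg hx0 _))
    (fun n => ?_) (summable_geometric_of_lt_one hx0 hx1)
  calc cFD n * x ^ (2 * n + 1) ≤ 1 * x ^ (2 * n + 1) :=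
        mul_le_mul_of_nonneg_right (cFD_le_one n) (pow_nonneg hx0 _)
    _ = x ^ (2 * n + 1) := one_mul _
    _ ≤ x ^ n := pow_le_pow_of_le_one hx0 hx1.le (by omega)

noncomputable def xk (k : ℕ) : ℝ := 1 - 1 / (k + 2)

lemma xk_pos (k : ℕ) : 0 < xk k := by
  unfold xk
  have h2 : (2:ℝ) ≤ (k:ℝ) + 2 := by linarith [Nat.cast_nonneg (α := ℝ) k]
  have : (1:ℝ) / ((k:ℝ) + 2) ≤ 1 / 2 := by
    apply one_div_le_one_div_of_le <;> linarith
  linarith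

lemma xk_lt_one (k : ℕ) : xk k < 1 := by
  unfold xk
  have h2 : (0:ℝ) < (k:ℝ) + 2 := by positivity
  have : (0:ℝ) < 1 / ((k:ℝ) + 2) := by positivity
  linarith

lemma xk_tendsto : Tendsto xk atTop (nhds 1) := by
  have h : Tendsto (fun k : ℕ => ((k : ℝ) + 2)) atTop atTop :=
    tendsto_atTop_add_const_right _ 2 tendsto_natCast_atTop_atTop
  have h2 : Tendsto (fun k : ℕ => 1 / ((k : ℝ) + 2)) atTop (nhds 0) := by
    simpa [one_div, Pi.inv_def] using h.inv_tendsto_atTop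
  have := tendsto_const_nhds (x := (1:ℝ)) (f := atTop (α := ℕ)) |>.sub h2
  rw [show (1:ℝ) = 1 - 0 by ring]
  exact this.congr fun k => by rw [xk]

lemma sum_range_cFD_le (M : ℕ) : ∑ n ∈ Finset.range M, cFD n ≤ π / 2 := by
  have hk : ∀ k : ℕ, ∑ n ∈ Finset.range M, cFD n * (xk k) ^ (2 * n + 1) ≤ π / 2 := by
    intro k
    calc ∑ n ∈ Finset.range M, cFD n * (xk k) ^ (2 * n + 1)
        ≤ ∑' n : ℕ, cFD n * (xk k) ^ (2 * n + 1) :=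
          Summable.sum_le_tsum _ (fun n _ => mul_nonneg (cFD_pos n).le (pow_nonneg (xk_pos k).le _))
            (summable_cx (xk_pos k).le (xk_lt_one k))
      _ = Real.arcsin (xk k) := by
          rw [arcsin_eq_tsum (xk_pos k) (xk_lt_one k)]
          exact tsum_congr fun n => by rw [cFD]
      _ ≤ π / 2 := Real.arcsin_le_pi_div_two _
  have htend : Tendsto (fun k => ∑ n ∈ Finset.range M, cFD n * (xk k) ^ (2 * n + 1))
      atTop (nhds (∑ n ∈ Finset.range M, cFD n)) := by
    apply tendsto_finset_sum
    intro n _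
    have : Tendsto (fun k => (xk k) ^ (2 * n + 1)) atTop (nhds (1 ^ (2 * n + 1))) :=
      xk_tendsto.pow _
    simpa using this.const_mul (cFD n)
  exact le_of_tendsto htend (Filter.Eventually.of_forall hk)

lemma summable_cFD : Summable cFD :=
  summable_of_sum_range_le (fun n => (cFD_pos n).le) sum_range_cFD_le

lemma tsum_cFD : ∑' n, cFD n = π / 2 := by
  apply le_antisymm
  · exact le_of_tendsto summable_cFD.hasSum.tendsto_sum_nat
      (Filter.Eventually.of_forall sum_range_cFD_le)
  · have hle : ∀ k : ℕ, Real.arcsin (xk k) ≤ ∑' n, cFD n := by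
      intro k
      rw [arcsin_eq_tsum (xk_pos k) (xk_lt_one k)]
      have : ∀ n : ℕ, aFD n / (2 * n + 1) * (xk k) ^ (2 * n + 1) ≤ cFD n := by
        intro n
        rw [show aFD n / (2 * (n:ℝ) + 1) = cFD n from rfl]
        calc cFD n * (xk k) ^ (2 * n + 1) ≤ cFD n * 1 := by
              apply mul_le_mul_of_nonneg_left _ (cFD_pos n).le
              exact pow_le_one₀ (xk_pos k).le (xk_lt_one k).le
          _ = cFD n := mul_one _
      exact Summable.tsum_le_tsum this
        ((summable_cx (xk_pos k).le (xk_lt_one k)).congr fun n => by rw [cFD])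
        summable_cFD
    have harc : Tendsto (fun k => Real.arcsin (xk k)) atTop (nhds (π / 2)) := by
      have := (Real.continuous_arcsin.tendsto 1).comp xk_tendsto
      simpa [Real.arcsin_one, Function.comp_def] using this
    exact le_of_tendsto harc (Filter.Eventually.of_forall hle)

lemma SsumFD_eq (M : ℕ) : SsumFD M = ∑ n ∈ Finset.range M, cFD n := by
  unfold SsumFD
  rw [← Finset.Ico_add_one_right_eq_Icc, Finset.sum_Ico_eq_sum_range]
  rw [show M + 1 - 1 = M by omega]
  apply Finset.sum_congr rfl
  intro n _
  rw [show 1 + n = n + 1 by ring]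
  exact cterm_eq n

theorem SsumFD_tendsto_pi_div_two :
    Tendsto SsumFD atTop (nhds (Real.pi / 2)) ∧
    StrictAntiOn (fun M : ℕ => 1 / SsumFD M) (Set.Ici 1) ∧
    Tendsto (fun M : ℕ => 1 / SsumFD M) atTop (nhds (2 / Real.pi)) := by
  have h1 : Tendsto SsumFD atTop (nhds (Real.pi / 2)) := by
    have h := summable_cFD.hasSum.tendsto_sum_nat
    rw [tsum_cFD] at h
    exact h.congr fun M => (SsumFD_eq M).symm
  have hpos : ∀ a : ℕ, 1 ≤ a → 0 < SsumFD a := by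
    intro a ha
    rw [SsumFD_eq]
    exact Finset.sum_pos (fun i _ => cFD_pos i) ⟨0, Finset.mem_range.mpr ha⟩
  have h2 : StrictAntiOn (fun M : ℕ => 1 / SsumFD M) (Set.Ici 1) := by
    intro a ha b hb hab
    simp only
    have hlt : SsumFD a < SsumFD b := by
      rw [SsumFD_eq, SsumFD_eq]
      apply Finset.sum_lt_sum_of_subset (Finset.range_subset_range.mpr hab.le)
        (i := a) (Finset.mem_range.mpr hab) (by simp) (cFD_pos a)
      exact fun j _ _ => (cFD_pos j).le
    exact one_div_lt_one_div_of_lt (hpos a ha) hlt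
  refine ⟨h1, h2, ?_⟩
  have hne : Real.pi / 2 ≠ 0 := by positivity
  have h3 := h1.inv₀ hne
  have : (Real.pi / 2)⁻¹ = 2 / Real.pi := by
    rw [inv_div]
  rw [this] at h3
  exact h3.congr fun M => (one_div (SsumFD M)).symm
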